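/- For real x, integers n ≥ 1 and k ≥ 1: k · x^{n-1} = Σ_{i_1 + ... + i_k = n} (n choose i_1,...,i_k) · Π_{j=1}^{k} (1 + i_j · (x-k)/n)^{i_j - 1}, where the sum ranges over nonnegative integer tuples summing to n (with the Abel polynomial convention that the factor for i_j = 0 equals 1). -/

import Mathlib

open Finset

/-- Abel polynomial `p_n(x) = x (x + n a)^{n-1}`, with `p_0 = 1`. -/
def abelP (a : ℝ) : ℕ → ℝ → ℝ
  | 0, _ => 1
  | (n+1), x => x * (x + (n+1) * a) ^ n

@[simp] lemma abelP_zero (a : ℝ) (x : ℝ) : abelP a 0 x = 1 := rfl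

lemma abelP_succ (a : ℝ) (n : ℕ) (x : ℝ) :
    abelP a (n+1) x = x * (x + (n+1) * a) ^ n := rfl

@[simp] lemma abelP_apply_zero (a : ℝ) (n : ℕ) : abelP a (n+1) 0 = 0 := by
  simp [abelP_succ]

lemma hasDerivAt_abelP (a : ℝ) (n : ℕ) (x : ℝ) :
    HasDerivAt (fun y => abelP a n y) (n * abelP a (n-1) (x + a)) x := by
  cases n with
  | zero =>
    simpa using (hasDerivAt_const x (1:ℝ))
  | succ n =>
    have h : HasDerivAt (fun y : ℝ => y * (y + (n+1) * a) ^ n)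
        (1 * (x + (n+1) * a) ^ n +
          x * ((n : ℝ) * (x + (n+1) * a) ^ (n-1) * 1)) x := by
      exact (hasDerivAt_id x).mul (((hasDerivAt_id x).add_const ((n+1) * a)).pow n)
    have heq : (1 : ℝ) * (x + (n+1) * a) ^ n +
          x * ((n : ℝ) * (x + (n+1) * a) ^ (n-1) * 1)
        = (n+1 : ℕ) * abelP a ((n+1)-1) (x + a) := by
      cases n with
      | zero => simp
      | succ m =>
        simp only [Nat.add_sub_cancel, abelP_succ]
        have : (x + (m + 1 + 1) * a) ^ (m+1) = (x + (m+1+1) * a) ^ m * (x + (m+1+1)*a) :=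
          (pow_succ _ _)
        push_cast
        rw [this]
        ring_nf
    have := heq ▸ h
    simpa only [abelP_succ] using this

lemma abelP_add (a : ℝ) (n : ℕ) (y x : ℝ) :
    abelP a n (x + y) =
      ∑ i ∈ Finset.range (n+1), (n.choose i : ℝ) * abelP a i x * abelP a (n-i) y := by
  induction n generalizing x with
  | zero => simp
  | succ n ih =>
    set f : ℝ → ℝ := fun z =>
      (∑ i ∈ Finset.range (n+2), ((n+1).choose i : ℝ) * abelP a i z * abelP a (n+1-i) y)
        - abelP a (n+1) (z + y) with hf
    suffices h : f x = 0 by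
      have := h
      simp only [hf, sub_eq_zero] at this
      exact this.symm
    have hderiv : ∀ z : ℝ, HasDerivAt f 0 z := by
      intro z
      have h1 : HasDerivAt (fun z : ℝ =>
          ∑ i ∈ Finset.range (n+2), ((n+1).choose i : ℝ) * abelP a i z * abelP a (n+1-i) y)
          (∑ i ∈ Finset.range (n+2),
            ((n+1).choose i : ℝ) * ((i : ℝ) * abelP a (i-1) (z + a)) * abelP a (n+1-i) y) z := by
        apply HasDerivAt.fun_sum
        intro i _
        exact (((hasDerivAt_abelP a i z).const_mul (((n+1).choose i : ℝ))).mul_const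
          (abelP a (n+1-i) y))
      have h2 : HasDerivAt (fun z : ℝ => abelP a (n+1) (z + y))
          (((n+1 : ℕ) : ℝ) * abelP a n ((z + y) + a)) z := by
        have := (hasDerivAt_abelP a (n+1) (z+y)).comp z ((hasDerivAt_id z).add_const y)
        simpa [Function.comp_def] using this
      have hsum : (∑ i ∈ Finset.range (n+2),
            ((n+1).choose i : ℝ) * ((i : ℝ) * abelP a (i-1) (z + a)) * abelP a (n+1-i) y)
          = ((n+1 : ℕ) : ℝ) * abelP a n ((z + y) + a) := by
        rw [Finset.sum_range_succ']
        simp only [Nat.cast_zero, zero_mul, mul_zero, add_zero, Nat.succ_sub_succ,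
          Nat.cast_add, Nat.cast_one, Nat.sub_zero]
        rw [show z + y + a = z + a + y by ring, ih (z+a), Finset.mul_sum]
        apply Finset.sum_congr rfl
        intro j hj
        have h' : ((n+1).choose (j+1) : ℝ) * ((j:ℝ)+1) = ((n:ℝ)+1) * (n.choose j : ℝ) := by
          exact_mod_cast (Nat.add_one_mul_choose_eq n j).symm
        linear_combination (abelP a j (z + a) * abelP a (n - j) y) * h'
      have := h1.sub h2
      rw [hsum] at this
      rw [sub_self] at this; exact this
    have hconst : f x = f 0 := by
      apply is_const_of_deriv_eq_zero
      · intro z; exact (hderiv z).differentiableAt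
      · intro z; exact (hderiv z).deriv
    rw [hconst, hf]
    simp only [zero_add, sub_eq_zero]
    rw [Finset.sum_eq_single 0]
    · simp
    · intro i _ hi
      obtain ⟨j, rfl⟩ := Nat.exists_eq_succ_of_ne_zero hi
      simp
    · simp

lemma multinomial_fin_cons (k : ℕ) (p : ℕ) (m : Fin k → ℕ) :
    Nat.multinomial Finset.univ (Fin.cons p m : Fin (k+1) → ℕ)
      = (p + ∑ i, m i).choose p * Nat.multinomial Finset.univ m := by
  have hpos : 0 < Nat.factorial p * ∏ i, Nat.factorial (m i) :=
    Nat.mul_pos (Nat.factorial_pos p) (Finset.prod_pos fun i _ => Nat.factorial_pos _)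
  apply Nat.eq_of_mul_eq_mul_left hpos
  have h1 : (Nat.factorial p * ∏ i, Nat.factorial (m i)) *
        Nat.multinomial Finset.univ (Fin.cons p m : Fin (k+1) → ℕ)
      = Nat.factorial (p + ∑ i, m i) := by
    have := Nat.multinomial_spec (Finset.univ : Finset (Fin (k+1))) (Fin.cons p m)
    rw [Fin.prod_univ_succ, Fin.sum_univ_succ] at this
    simpa using this
  have h2 : (Nat.factorial p * ∏ i, Nat.factorial (m i)) *
        ((p + ∑ i, m i).choose p * Nat.multinomial Finset.univ m)
      = Nat.factorial (p + ∑ i, m i) := by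
    have hspec := Nat.multinomial_spec (Finset.univ : Finset (Fin k)) m
    have hch := Nat.choose_mul_factorial_mul_factorial
      (Nat.le_add_right p (∑ i, m i))
    rw [Nat.add_sub_cancel_left] at hch
    calc (Nat.factorial p * ∏ i, Nat.factorial (m i)) *
          ((p + ∑ i, m i).choose p * Nat.multinomial Finset.univ m)
        = ((p + ∑ i, m i).choose p * Nat.factorial p) *
            ((∏ i, Nat.factorial (m i)) * Nat.multinomial Finset.univ m) := by
          ring
      _ = ((p + ∑ i, m i).choose p * Nat.factorial p) * Nat.factorial (∑ i, m i) := by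
          rw [hspec]
      _ = Nat.factorial (p + ∑ i, m i) := by rw [← hch]
  rw [h1, h2]

lemma sum_antidiagonalTuple_succ {M : Type*} [AddCommMonoid M] (k n : ℕ)
    (f : (Fin (k+1) → ℕ) → M) :
    ∑ m ∈ Finset.Nat.antidiagonalTuple (k+1) n, f m
      = ∑ p ∈ Finset.HasAntidiagonal.antidiagonal n, ∑ m ∈ Finset.Nat.antidiagonalTuple k p.2,
          f (Fin.cons p.1 m) := by
  rw [Finset.sum_sigma' (Finset.HasAntidiagonal.antidiagonal n)
    (fun p => Finset.Nat.antidiagonalTuple k p.2) (fun p m => f (Fin.cons p.1 m))]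
  refine (Finset.sum_nbij' (fun m => (⟨(m 0, ∑ i, m (Fin.succ i)), Fin.tail m⟩ :
      Σ p : ℕ × ℕ, Fin k → ℕ)) (fun x => Fin.cons x.1.1 x.2) ?_ ?_ ?_ ?_ ?_)
  · intro m h
    simp only [Finset.Nat.mem_antidiagonalTuple] at h
    simp only [Finset.mem_sigma, Finset.HasAntidiagonal.mem_antidiagonal, Finset.Nat.mem_antidiagonalTuple]
    constructor
    · rw [← h, Fin.sum_univ_succ]
    · rfl
  · rintro ⟨⟨p1, p2⟩, m⟩ h
    simp only [Finset.mem_sigma, Finset.HasAntidiagonal.mem_antidiagonal,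
      Finset.Nat.mem_antidiagonalTuple] at h ⊢
    rw [Fin.sum_cons, h.2, h.1]
  · intro m h
    simp [Fin.cons_self_tail]
  · rintro ⟨⟨p1, p2⟩, m⟩ h
    simp only [Finset.mem_sigma, Finset.HasAntidiagonal.mem_antidiagonal,
      Finset.Nat.mem_antidiagonalTuple] at h
    simp only [Fin.cons_zero, Fin.tail_cons, Fin.cons_succ]
    have h2 := h.2
    subst h2
    rfl
  · intro m h
    rw [Fin.cons_self_tail]

lemma abelP_multi (a : ℝ) (k : ℕ) : ∀ (n : ℕ) (x : Fin k → ℝ),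
    ∑ m ∈ Finset.Nat.antidiagonalTuple k n,
        (Nat.multinomial Finset.univ m : ℝ) * ∏ j, abelP a (m j) (x j)
      = abelP a n (∑ j, x j) := by
  induction k with
  | zero =>
    intro n x
    cases n with
    | zero => simp
    | succ n => simp
  | succ k ih =>
    intro n x
    rw [sum_antidiagonalTuple_succ]
    have step : ∀ p ∈ Finset.HasAntidiagonal.antidiagonal n,
        (∑ m ∈ Finset.Nat.antidiagonalTuple k p.2,
          (Nat.multinomial Finset.univ (Fin.cons p.1 m : Fin (k+1) → ℕ) : ℝ) *
            ∏ j, abelP a ((Fin.cons p.1 m : Fin (k+1) → ℕ) j) (x j))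
        = (n.choose p.1 : ℝ) * abelP a p.1 (x 0) * abelP a p.2 (∑ j, x (Fin.succ j)) := by
      rintro ⟨p1, p2⟩ hp
      rw [Finset.HasAntidiagonal.mem_antidiagonal] at hp
      have : ∀ m ∈ Finset.Nat.antidiagonalTuple k p2,
          (Nat.multinomial Finset.univ (Fin.cons p1 m : Fin (k+1) → ℕ) : ℝ) *
            ∏ j, abelP a ((Fin.cons p1 m : Fin (k+1) → ℕ) j) (x j)
          = (n.choose p1 : ℝ) * abelP a p1 (x 0) *
              ((Nat.multinomial Finset.univ m : ℝ) * ∏ j, abelP a (m j) (x (Fin.succ j))) := by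
        intro m hm
        rw [Finset.Nat.mem_antidiagonalTuple] at hm
        rw [multinomial_fin_cons, hm, hp, Fin.prod_univ_succ]
        simp only [Fin.cons_zero, Fin.cons_succ]
        push_cast
        ring
      rw [Finset.sum_congr rfl this, ← Finset.mul_sum, ih p2 (fun j => x (Fin.succ j))]
    rw [Finset.sum_congr rfl step, Fin.sum_univ_succ,
      Finset.Nat.sum_antidiagonal_eq_sum_range_succ_mk, abelP_add]

lemma abelP_one (a : ℝ) (i : ℕ) : abelP a i 1 = (1 + i * a) ^ (i - 1) := by
  cases i with
  | zero => simp
  | succ i => simp [abelP_succ]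

theorem abel_corollary (n k : ℕ) (hn : 1 ≤ n) (hk : 1 ≤ k) (x : ℝ) :
    (k : ℝ) * x ^ (n - 1) =
      ∑ m ∈ Finset.Nat.antidiagonalTuple k n,
        (Nat.multinomial Finset.univ m : ℝ) *
          ∏ j, (1 + (m j : ℝ) * (x - k) / n) ^ (m j - 1) := by
  have hn0 : (n : ℝ) ≠ 0 := Nat.cast_ne_zero.mpr (by omega)
  set a : ℝ := (x - k) / n with ha
  have key := abelP_multi a k n (fun _ => (1 : ℝ))
  have hterm : ∀ m : Fin k → ℕ,
      (∏ j, abelP a (m j) ((fun _ => (1:ℝ)) j))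
        = ∏ j, (1 + (m j : ℝ) * (x - k) / n) ^ (m j - 1) := by
    intro m
    refine Finset.prod_congr rfl fun j _ => ?_
    rw [abelP_one, ha, mul_div_assoc]
  have hsum1 : (∑ _j : Fin k, (1 : ℝ)) = (k : ℝ) := by simp
  rw [hsum1] at key
  have hrhs : abelP a n (k : ℝ) = (k : ℝ) * x ^ (n - 1) := by
    obtain ⟨t, rfl⟩ : ∃ t, n = t + 1 := ⟨n - 1, by omega⟩
    rw [abelP_succ]
    have h1 : ((t:ℝ)+1) ≠ 0 := by positivity
    have h2 : (k : ℝ) + ((t:ℝ)+1) * a = x := by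
      rw [ha]
      push_cast
      field_simp
      ring
    rw [h2, Nat.add_sub_cancel]
  rw [← hrhs, ← key]
  refine Finset.sum_congr rfl fun m _ => ?_
  rw [hterm m]
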